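/- Every infinite virtually cyclic group A admits a surjective homomorphism with finite kernel onto either the infinite cyclic group ℤ or the infinite dihedral group D∞. -/

import Mathlib

/-- A group is virtually cyclic if it has a cyclic subgroup of finite index. -/
def IsVirtuallyCyclic (G : Type*) [Group G] : Prop :=
  ∃ H : Subgroup G, IsCyclic H ∧ H.FiniteIndex

open Subgroup

theorem exists_surj_int_hom {G : Type*} [Group G] (z : G)
    (hz : z ∈ Subgroup.center G) (hord : ¬ IsOfFinOrder z)
    (hfi : (Subgroup.zpowers z).FiniteIndex) :
    ∃ c : G →* Multiplicative ℤ, Function.Surjective c ∧ ((c.ker : Set G)).Finite ∧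
      ∀ g, (g ∈ c.ker ↔ g ^ ((Subgroup.center G).index * (((Subgroup.zpowers z).subgroupOf (Subgroup.center G)).index)) = 1) := by
  haveI := hfi
  haveI hZfi : (center G).FiniteIndex := Subgroup.finiteIndex_of_le (zpowers_le.mpr hz)
  set n := (center G).index with hn
  have hn0 : n ≠ 0 := hZfi.index_ne_zero
  set M : Subgroup ↥(center G) := (zpowers z).subgroupOf (center G) with hM
  set m := M.index with hmdef
  haveI hMfi : M.FiniteIndex := Subgroup.instFiniteIndex_subgroupOf (zpowers z) (center G)
  have hm0 : m ≠ 0 := hMfi.index_ne_zero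
  set V := MonoidHom.transferCenterPow G with hV
  have hVcoe : ∀ g : G, ((V g : ↥(center G)) : G) = g ^ n := fun g => MonoidHom.transferCenterPow_apply g
  have zinj : Function.Injective fun k : ℤ => z ^ k := injective_zpow_iff_not_isOfFinOrder.mpr hord
  have key : ∀ g : G, ∃ k : ℤ, g ^ (n * m) = z ^ k := by
    intro g
    have h1 : (V g) ^ m ∈ M := M.pow_index_mem _
    rw [hM, mem_subgroupOf] at h1
    rw [mem_zpowers_iff] at h1
    obtain ⟨k, hk⟩ := h1
    refine ⟨k, ?_⟩
    rw [hk]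
    push_cast
    rw [hVcoe, ← pow_mul]
  set e : G → ℤ := fun g => (key g).choose with he_def
  have he : ∀ g : G, g ^ (n * m) = z ^ e g := fun g => (key g).choose_spec
  have hpowmul : ∀ g h : G, (g * h) ^ (n * m) = g ^ (n * m) * h ^ (n * m) := by
    intro g h
    have h1 : (g * h) ^ n = g ^ n * h ^ n := by
      have h3 := congrArg (fun w : ↥(center G) => (w : G)) (map_mul V g h)
      push_cast at h3
      simp only [hVcoe] at h3
      exact h3
    have hgnc : g ^ n ∈ center G := by rw [← hVcoe]; exact (V g).2
    have hcomm : Commute (g ^ n) (h ^ n) := (Subgroup.mem_center_iff.mp hgnc _).symm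
    rw [pow_mul, h1, hcomm.mul_pow, ← pow_mul, ← pow_mul]
  have e_add : ∀ g h : G, e (g * h) = e g + e h := by
    intro g h
    apply zinj
    show z ^ e (g * h) = z ^ (e g + e h)
    rw [← he, zpow_add, ← he, ← he, hpowmul]
  have e_one : e 1 = 0 := by
    apply zinj
    show z ^ e 1 = z ^ (0 : ℤ)
    rw [← he, one_pow, zpow_zero]
  have e_inv : ∀ g : G, e g⁻¹ = - e g := by
    intro g
    have := e_add g g⁻¹
    rw [mul_inv_cancel, e_one] at this
    omega
  have e_z : e z = (n * m : ℤ) := by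
    apply zinj
    show z ^ e z = z ^ ((n * m : ℕ) : ℤ)
    rw [← he, zpow_natCast]
  set S : AddSubgroup ℤ :=
    { carrier := Set.range e
      add_mem' := by rintro _ _ ⟨g, rfl⟩ ⟨h, rfl⟩; exact ⟨g * h, e_add g h⟩
      zero_mem' := ⟨1, e_one⟩
      neg_mem' := by rintro _ ⟨g, rfl⟩; exact ⟨g⁻¹, e_inv g⟩ } with hS
  obtain ⟨a, ha⟩ := Int.subgroup_cyclic S
  have hmemS : ∀ g : G, ∃ k : ℤ, e g = k * a := by
    intro g
    have : e g ∈ S := ⟨g, rfl⟩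
    rw [ha, AddSubgroup.mem_closure_singleton] at this
    obtain ⟨k, hk⟩ := this
    exact ⟨k, by simpa [mul_comm] using hk.symm⟩
  have ha0 : a ≠ 0 := by
    rintro rfl
    obtain ⟨k, hk⟩ := hmemS z
    rw [e_z, mul_zero] at hk
    exact (Nat.mul_ne_zero hn0 hm0) (by exact_mod_cast hk)
  set q : G → ℤ := fun g => (hmemS g).choose with hq_def
  have hq : ∀ g, e g = q g * a := fun g => (hmemS g).choose_spec
  have qinj : ∀ {k₁ k₂ : ℤ}, k₁ * a = k₂ * a → k₁ = k₂ := fun h => mul_right_cancel₀ ha0 h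
  have q_add : ∀ g h : G, q (g * h) = q g + q h := by
    intro g h
    apply qinj
    rw [← hq, e_add, add_mul, ← hq, ← hq]
  have q_one : q 1 = 0 := by
    apply qinj
    rw [← hq, e_one, zero_mul]
  have q_zero_iff : ∀ g, q g = 0 ↔ e g = 0 := by
    intro g
    constructor
    · intro h; rw [hq, h, zero_mul]
    · intro h; apply qinj; rw [← hq, h, zero_mul]
  set f : G →* Multiplicative ℤ :=
    { toFun := fun g => Multiplicative.ofAdd (q g)
      map_one' := by simp [q_one]
      map_mul' := by intro g h; simp [q_add, ofAdd_add] } with hf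
  have hker : ∀ g, g ∈ f.ker ↔ g ^ (n * m) = 1 := by
    intro g
    rw [MonoidHom.mem_ker]
    constructor
    · intro h
      have : q g = 0 := by simpa [hf] using h
      rw [he, (q_zero_iff g).mp this, zpow_zero]
    · intro h
      have : z ^ e g = z ^ (0 : ℤ) := by rw [← he, h, zpow_zero]
      have he0 : e g = 0 := zinj this
      show Multiplicative.ofAdd (q g) = 1
      simp [(q_zero_iff g).mpr he0]
  refine ⟨f, ?_, ?_, hker⟩
  · -- surjectivity
    have haS : a ∈ S := by rw [ha]; exact AddSubgroup.subset_closure rfl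
    obtain ⟨g₀, hg₀⟩ := haS
    have hq₀ : q g₀ = 1 := qinj (by rw [← hq, hg₀, one_mul])
    intro w
    refine ⟨g₀ ^ (Multiplicative.toAdd w), ?_⟩
    rw [map_zpow]
    show (Multiplicative.ofAdd (q g₀)) ^ (Multiplicative.toAdd w) = w
    rw [hq₀]
    rw [← ofAdd_zsmul]
    simp
  · -- finiteness of kernel
    haveI : Finite (G ⧸ zpowers z) := (zpowers z).finite_quotient_of_finiteIndex
    have hinj : Function.Injective
        (fun g : ↥f.ker => (QuotientGroup.mk (g : G) : G ⧸ zpowers z)) := by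
      rintro ⟨g₁, h₁⟩ ⟨g₂, h₂⟩ hgg
      have : (g₁ : G)⁻¹ * g₂ ∈ zpowers z := (QuotientGroup.eq).mp hgg
      obtain ⟨k, hk⟩ := mem_zpowers_iff.mp this
      have hker12 : g₁⁻¹ * g₂ ∈ f.ker := f.ker.mul_mem (f.ker.inv_mem h₁) h₂
      rw [← hk] at hker12
      rw [hker (z ^ k)] at hker12
      rw [← zpow_natCast, ← zpow_mul] at hker12
      have : k * (n * m : ℕ) = 0 := by
        apply zinj
        show z ^ (k * ((n*m : ℕ) : ℤ)) = z ^ (0:ℤ)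
        rw [zpow_zero]
        simpa using hker12
      have hk0 : k = 0 := by
        rcases mul_eq_zero.mp this with h | h
        · exact h
        · exact absurd (by exact_mod_cast h) (Nat.mul_ne_zero hn0 hm0)
      rw [hk0, zpow_zero] at hk
      have hgeq : g₁⁻¹ * g₂ = 1 := hk.symm
      exact Subtype.ext (inv_mul_eq_one.mp hgeq)
    have : Finite ↥f.ker := Finite.of_injective _ hinj
    exact Set.finite_coe_iff.mp this

theorem hom_conj_inv {G : Type*} [Group G] (z : G) (hz : z ∈ Subgroup.center G)
    (hfi : (Subgroup.zpowers z).FiniteIndex)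
    (c : G →* Multiplicative ℤ) (τ : G →* G) (hτ : τ z = z⁻¹) (g : G) :
    c (τ g) = (c g)⁻¹ := by
  haveI := hfi
  haveI hnorm : (Subgroup.zpowers z).Normal := by
    constructor
    intro w hw a
    obtain ⟨j, rfl⟩ := Subgroup.mem_zpowers_iff.mp hw
    have hc : z ^ j ∈ Subgroup.center G := Subgroup.zpow_mem (Subgroup.center G) hz j
    have : a * z ^ j * a⁻¹ = z ^ j := by
      rw [Subgroup.mem_center_iff.mp hc a, mul_assoc, mul_inv_cancel, mul_one]
    rw [this]
    exact Subgroup.zpow_mem _ (Subgroup.mem_zpowers z) j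
  set d : G →* Multiplicative ℤ := c * (c.comp τ) with hd_def
  have hd : ∀ w, d w = c w * c (τ w) := fun _ => rfl
  have hdz : d z = 1 := by rw [hd, hτ, map_inv, mul_inv_cancel]
  have hdzp : ∀ j : ℤ, d (z ^ j) = 1 := by intro j; rw [map_zpow, hdz, one_zpow]
  set k := (Subgroup.zpowers z).index with hk_def
  have hk0 : k ≠ 0 := hfi.index_ne_zero
  have hk : d g ^ k = 1 := by
    rw [← map_pow]
    obtain ⟨j, hj⟩ := Subgroup.mem_zpowers_iff.mp ((Subgroup.zpowers z).pow_index_mem g)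
    rw [← hj, hdzp]
  have htoadd : (k : ℤ) * Multiplicative.toAdd (d g) = 0 := by
    have h1 := congrArg Multiplicative.toAdd hk
    rw [toAdd_pow] at h1
    simpa [nsmul_eq_mul] using h1
  have hdg1 : d g = 1 := by
    rcases mul_eq_zero.mp htoadd with h | h
    · exact absurd (by exact_mod_cast h) hk0
    · have : Multiplicative.toAdd (d g) = 0 := h
      have := congrArg Multiplicative.ofAdd this
      simpa using this
  have := hd g ▸ hdg1
  exact (inv_eq_of_mul_eq_one_right this).symm

/-- Every infinite virtually cyclic group surjects with finite kernel onto `ℤ` or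
onto the infinite dihedral group `D∞` (= `DihedralGroup 0`). -/
theorem infinite_virtually_cyclic_maps_onto_Z_or_Dinfty
    (A : Type*) [Group A] [Infinite A] (hA : IsVirtuallyCyclic A) :
    (∃ f : A →* Multiplicative ℤ, Function.Surjective f ∧ (f.ker : Set A).Finite) ∨
    (∃ f : A →* DihedralGroup 0, Function.Surjective f ∧ (f.ker : Set A).Finite) := by
  classical
  obtain ⟨H, hHc, hHfi⟩ := hA
  haveI := hHfi
  haveI := hHc
  set N := H.normalCore with hNdef
  haveI hNfi : N.FiniteIndex := Subgroup.finiteIndex_normalCore H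
  haveI hNnorm : N.Normal := Subgroup.normalCore_normal H
  haveI : IsCyclic ↥N :=
    isCyclic_of_surjective _ (Subgroup.subgroupOfEquivOfLe H.normalCore_le).surjective
  haveI hNinf : Infinite ↥N := by
    by_contra hfin
    rw [not_infinite_iff_finite] at hfin
    haveI : Finite (A ⧸ N) := N.finite_quotient_of_finiteIndex
    haveI : Finite A := Finite.of_equiv _ (Subgroup.groupEquivQuotientProdSubgroup (s := N)).symm
    exact not_finite A
  obtain ⟨g, hg⟩ := IsCyclic.exists_generator (α := ↥N)
  set x : A := (g : A) with hxdef
  have hxN : Subgroup.zpowers x = N := by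
    apply le_antisymm
    · exact Subgroup.zpowers_le.mpr g.2
    · intro w hw
      obtain ⟨k, hk⟩ := Subgroup.mem_zpowers_iff.mp (hg ⟨w, hw⟩)
      have h2 := congrArg (Subtype.val) hk
      rw [SubgroupClass.coe_zpow] at h2
      exact Subgroup.mem_zpowers_iff.mpr ⟨k, h2⟩
  haveI hxfi : (Subgroup.zpowers x).FiniteIndex := by rw [hxN]; exact hNfi
  haveI hxnorm : (Subgroup.zpowers x).Normal := by rw [hxN]; exact hNnorm
  have hxord : ¬ IsOfFinOrder x := by
    rw [← infinite_zpowers, hxN]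
    exact Set.infinite_coe_iff.mp hNinf
  have zinj : Function.Injective fun k : ℤ => x ^ k :=
    injective_zpow_iff_not_isOfFinOrder.mpr hxord
  have dich : ∀ a : A, a * x * a⁻¹ = x ∨ a * x * a⁻¹ = x⁻¹ := by
    intro a
    obtain ⟨k, hk⟩ := Subgroup.mem_zpowers_iff.mp
      (hxnorm.conj_mem x (Subgroup.mem_zpowers x) a)
    obtain ⟨j, hj⟩ := Subgroup.mem_zpowers_iff.mp
      (hxnorm.conj_mem x (Subgroup.mem_zpowers x) a⁻¹)
    have hjk : x ^ (j * k) = x ^ (1 : ℤ) := by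
      calc x ^ (j * k) = (x ^ j) ^ k := by rw [zpow_mul]
        _ = (a⁻¹ * x * a⁻¹⁻¹) ^ k := by rw [hj]
        _ = a⁻¹ * x ^ k * a⁻¹⁻¹ := conj_zpow
        _ = a⁻¹ * (a * x * a⁻¹) * a⁻¹⁻¹ := by rw [hk]
        _ = x ^ (1 : ℤ) := by group
    have hk1 : j * k = 1 := zinj hjk
    rcases Int.isUnit_iff.mp (IsUnit.of_mul_eq_one (a := k) j (by rw [mul_comm]; exact hk1)) with h | h
    · left; rw [← hk, h, zpow_one]
    · right; rw [← hk, h, zpow_neg, zpow_one]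
  by_cases hcen : ∀ a : A, a * x = x * a
  · left
    have hxc : x ∈ Subgroup.center A := Subgroup.mem_center_iff.mpr hcen
    obtain ⟨c, hcs, hck, -⟩ := exists_surj_int_hom x hxc hxord hxfi
    exact ⟨c, hcs, hck⟩
  · right
    push_neg at hcen
    obtain ⟨t, ht0⟩ := hcen
    set P : Subgroup A := Subgroup.centralizer {x} with hPdef
    have memP : ∀ a : A, a ∈ P ↔ a * x = x * a := fun a => Subgroup.mem_centralizer_singleton_iff
    have hxP : x ∈ P := (memP x).mpr rfl
    have conj_of_P : ∀ a : A, a ∈ P → a * x * a⁻¹ = x := by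
      intro a ha
      rw [mul_inv_eq_iff_eq_mul]
      exact (memP a).mp ha
    have mem_of_conj : ∀ a : A, a * x * a⁻¹ = x → a ∈ P := by
      intro a h
      rw [memP]
      rw [mul_inv_eq_iff_eq_mul] at h
      exact h
    have conj_of_notP : ∀ a : A, a ∉ P → a * x * a⁻¹ = x⁻¹ := by
      intro a ha
      rcases dich a with h | h
      · exact absurd (mem_of_conj a h) ha
      · exact h
    have hxx : x⁻¹ ≠ x := by
      intro hh
      apply hxord
      apply isOfFinOrder_iff_pow_eq_one.mpr
      refine ⟨2, two_pos, ?_⟩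
      rw [pow_two]
      nth_rewrite 1 [← hh]
      rw [inv_mul_cancel]
    have htP : t ∉ P := fun h => ht0 ((memP t).mp h)
    have conjP : ∀ u a : A, a ∈ P → u * a * u⁻¹ ∈ P := by
      intro u a ha
      by_cases hu : u ∈ P
      · exact P.mul_mem (P.mul_mem hu ha) (P.inv_mem hu)
      · apply mem_of_conj
        have huinv : u⁻¹ ∉ P := fun hh => hu (by simpa using P.inv_mem hh)
        have h1 : u⁻¹ * x * u⁻¹⁻¹ = x⁻¹ := conj_of_notP u⁻¹ huinv
        rw [inv_inv] at h1
        have hax : a * x⁻¹ * a⁻¹ = x⁻¹ := by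
          have h2 : a * x⁻¹ * a⁻¹ = (a * x * a⁻¹)⁻¹ := by group
          rw [h2, conj_of_P a ha]
        have h3 : u * x⁻¹ * u⁻¹ = x := by
          have h4 : u * x⁻¹ * u⁻¹ = (u * x * u⁻¹)⁻¹ := by group
          rw [h4, conj_of_notP u hu, inv_inv]
        calc (u*a*u⁻¹) * x * (u*a*u⁻¹)⁻¹
            = u * (a * (u⁻¹ * x * u) * a⁻¹) * u⁻¹ := by group
          _ = u * (a * x⁻¹ * a⁻¹) * u⁻¹ := by rw [h1]
          _ = u * x⁻¹ * u⁻¹ := by rw [hax]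
          _ = x := h3
    have hPN : ∀ a b : A, a ∈ P → b ∉ P → a * b ∉ P := by
      intro a b ha hb hab
      have h1 := conj_of_P (a*b) hab
      have h2 : (a*b) * x * (a*b)⁻¹ = a * (b*x*b⁻¹) * a⁻¹ := by group
      rw [h2, conj_of_notP b hb] at h1
      have h3 : a * x⁻¹ * a⁻¹ = x⁻¹ := by
        have h4 : a * x⁻¹ * a⁻¹ = (a * x * a⁻¹)⁻¹ := by group
        rw [h4, conj_of_P a ha]
      rw [h3] at h1
      exact hxx h1
    have hNP : ∀ a b : A, a ∉ P → b ∈ P → a * b ∉ P := by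
      intro a b ha hb hab
      have h1 := conj_of_P (a*b) hab
      have h2 : (a*b) * x * (a*b)⁻¹ = a * (b*x*b⁻¹) * a⁻¹ := by group
      rw [h2, conj_of_P b hb, conj_of_notP a ha] at h1
      exact hxx h1
    have hNN : ∀ a b : A, a ∉ P → b ∉ P → a * b ∈ P := by
      intro a b ha hb
      apply mem_of_conj
      have h2 : (a*b) * x * (a*b)⁻¹ = a * (b*x*b⁻¹) * a⁻¹ := by group
      rw [h2, conj_of_notP b hb]
      have h4 : a * x⁻¹ * a⁻¹ = (a * x * a⁻¹)⁻¹ := by group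
      rw [h4, conj_of_notP a ha, inv_inv]
    have htinvP : t⁻¹ ∉ P := fun hh => htP (by simpa using P.inv_mem hh)
    have ht : t * x * t⁻¹ = x⁻¹ := conj_of_notP t htP
    have hconjinv : ∀ a, a ∈ P → t⁻¹ * a * t ∈ P := by
      intro a ha
      have := conjP t⁻¹ a ha
      rwa [inv_inv] at this
    -- the central element of P
    set z' : ↥P := ⟨x, hxP⟩ with hz'def
    have hz'c : z' ∈ Subgroup.center ↥P := by
      rw [Subgroup.mem_center_iff]
      intro p
      apply Subtype.ext
      show (p : A) * x = x * (p : A)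
      exact (memP _).mp p.2
    have hz'ord : ¬ IsOfFinOrder z' := by
      intro hf
      apply hxord
      obtain ⟨n, hn, h1⟩ := isOfFinOrder_iff_pow_eq_one.mp hf
      refine isOfFinOrder_iff_pow_eq_one.mpr ⟨n, hn, ?_⟩
      have h2 := congrArg Subtype.val h1
      simpa using h2
    haveI hz'fi : (Subgroup.zpowers z').FiniteIndex := by
      have heq : Subgroup.zpowers z' = (Subgroup.zpowers x).subgroupOf P := by
        ext p
        simp only [Subgroup.mem_subgroupOf, Subgroup.mem_zpowers_iff, Subtype.ext_iff,
          SubgroupClass.coe_zpow]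
        exact Iff.rfl
      rw [heq]
      exact Subgroup.instFiniteIndex_subgroupOf _ _
    obtain ⟨c, hcsurj, hcker, -⟩ := exists_surj_int_hom z' hz'c hz'ord hz'fi
    have hτmem : ∀ p : ↥P, t * (p : A) * t⁻¹ ∈ P := fun p => conjP t _ p.2
    set τ : ↥P →* ↥P :=
      { toFun := fun p => ⟨t * (p : A) * t⁻¹, hτmem p⟩
        map_one' := by
          apply Subtype.ext
          show t * ((1 : ↥P) : A) * t⁻¹ = ((1 : ↥P) : A)
          simp
        map_mul' := by
          intro p q
          apply Subtype.ext
          show t * ((p : A) * (q : A)) * t⁻¹ = (t * (p : A) * t⁻¹) * (t * (q : A) * t⁻¹)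
          group } with hτdef
    have hτz : τ z' = z'⁻¹ := by
      apply Subtype.ext
      show t * x * t⁻¹ = x⁻¹
      exact ht
    have hequiv : ∀ p : ↥P, c (τ p) = (c p)⁻¹ :=
      fun p => hom_conj_inv z' hz'c hz'fi c τ hτz p
    -- the integer-valued cocycle
    set e : A → ℤ := fun a => if h : a ∈ P then Multiplicative.toAdd (c ⟨a, h⟩) else 0
      with hedef
    have e_spec : ∀ (a : A) (h : a ∈ P), e a = Multiplicative.toAdd (c ⟨a, h⟩) := by
      intro a h
      simp only [hedef]
      rw [dif_pos h]
    have e_mul : ∀ a b : A, a ∈ P → b ∈ P → e (a * b) = e a + e b := by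
      intro a b ha hb
      rw [e_spec a ha, e_spec b hb, e_spec (a*b) (P.mul_mem ha hb)]
      have h5 : (⟨a*b, P.mul_mem ha hb⟩ : ↥P) = ⟨a, ha⟩ * ⟨b, hb⟩ := rfl
      rw [h5, map_mul, toAdd_mul]
    have e_one : e 1 = 0 := by
      rw [e_spec 1 P.one_mem]
      have h5 : (⟨(1:A), P.one_mem⟩ : ↥P) = 1 := rfl
      rw [h5, map_one]
      rfl
    have e_inv : ∀ a : A, a ∈ P → e a⁻¹ = - e a := by
      intro a ha
      have h1 := e_mul a a⁻¹ ha (P.inv_mem ha)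
      rw [mul_inv_cancel, e_one] at h1
      omega
    have e_conj : ∀ a : A, a ∈ P → e (t * a * t⁻¹) = - e a := by
      intro a ha
      have h1 := hequiv ⟨a, ha⟩
      have h2 : τ ⟨a, ha⟩ = ⟨t * a * t⁻¹, conjP t a ha⟩ := rfl
      rw [h2] at h1
      rw [e_spec _ (conjP t a ha), h1, toAdd_inv, e_spec a ha]
    have e_conj' : ∀ a : A, a ∈ P → e (t⁻¹ * a * t) = - e a := by
      intro a ha
      have hm : t⁻¹ * a * t ∈ P := hconjinv a ha
      have h1 := e_conj _ hm
      rw [show t * (t⁻¹ * a * t) * t⁻¹ = a from by group] at h1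
      omega
    have htt : t * t ∈ P := hNN t t htP htP
    have e_tt : e (t * t) = 0 := by
      have h1 := e_conj (t*t) htt
      rw [show t * (t * t) * t⁻¹ = t * t from by group] at h1
      omega
    -- dihedral multiplication rules over ℤ
    have hrr : ∀ i j : ℤ, (DihedralGroup.r i : DihedralGroup 0) * DihedralGroup.r j
        = DihedralGroup.r (i + j) := by
      intro i j
      have h := DihedralGroup.r_mul_r (n := 0) i j
      exact h
    have hrs : ∀ i j : ℤ, (DihedralGroup.r i : DihedralGroup 0) * DihedralGroup.sr j
        = DihedralGroup.sr (j - i) := by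
      intro i j
      have h := DihedralGroup.r_mul_sr (n := 0) i j
      exact h
    have hsr : ∀ i j : ℤ, (DihedralGroup.sr i : DihedralGroup 0) * DihedralGroup.r j
        = DihedralGroup.sr (i + j) := by
      intro i j
      have h := DihedralGroup.sr_mul_r (n := 0) i j
      exact h
    have hss : ∀ i j : ℤ, (DihedralGroup.sr i : DihedralGroup 0) * DihedralGroup.sr j
        = DihedralGroup.r (j - i) := by
      intro i j
      have h := DihedralGroup.sr_mul_sr (n := 0) i j
      exact h
    -- the homomorphism to the infinite dihedral group
    set f : A →* DihedralGroup 0 :=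
      { toFun := fun a =>
          if a ∈ P then DihedralGroup.r (e a) else DihedralGroup.sr (e (t * a))
        map_one' := by
          rw [if_pos P.one_mem, DihedralGroup.one_def, e_one]
          rfl
        map_mul' := by
          intro a b
          by_cases ha : a ∈ P <;> by_cases hb : b ∈ P
          · rw [if_pos (P.mul_mem ha hb), if_pos ha, if_pos hb, hrr, e_mul a b ha hb]
          · have hab : a * b ∉ P := hPN a b ha hb
            rw [if_neg hab, if_pos ha, if_neg hb, hrs]
            apply congrArg
            have m1 : t * a * t⁻¹ ∈ P := conjP t a ha
            have m2 : t * b ∈ P := hNN t b htP hb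
            rw [show t * (a * b) = (t * a * t⁻¹) * (t * b) from by group,
              e_mul _ _ m1 m2, e_conj a ha]
            ring
          · have hab : a * b ∉ P := hNP a b ha hb
            rw [if_neg hab, if_neg ha, if_pos hb, hsr]
            apply congrArg
            have m2 : t * a ∈ P := hNN t a htP ha
            rw [show t * (a * b) = (t * a) * b from by group, e_mul _ _ m2 hb]
          · have hab : a * b ∈ P := hNN a b ha hb
            rw [if_pos hab, if_neg ha, if_neg hb, hss]
            apply congrArg
            have m1 : t * a ∈ P := hNN t a htP ha
            have m2 : t * b ∈ P := hNN t b htP hb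
            have m4 : t⁻¹ * (t * a) * t ∈ P := hconjinv _ m1
            have m5 : (t * t)⁻¹ ∈ P := P.inv_mem htt
            rw [show a * b = (t⁻¹ * (t * a) * t) * ((t * t)⁻¹ * (t * b)) from by group,
              e_mul _ _ m4 (P.mul_mem m5 m2), e_mul _ _ m5 m2, e_conj' _ m1,
              e_inv _ htt, e_tt]
            ring } with hfdef
    have f_apply : ∀ a : A, f a =
        if a ∈ P then DihedralGroup.r (e a) else DihedralGroup.sr (e (t * a)) :=
      fun a => rfl
    refine ⟨f, ?_, ?_⟩
    · -- surjectivity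
      intro d
      cases d with
      | r k =>
        obtain ⟨p, hp⟩ := hcsurj (Multiplicative.ofAdd k)
        refine ⟨(p : A), ?_⟩
        rw [f_apply, if_pos p.2]
        apply congrArg
        rw [e_spec _ p.2]
        have h5 : (⟨(p : A), p.2⟩ : ↥P) = p := rfl
        rw [h5, hp]
        rfl
      | sr k =>
        obtain ⟨p, hp⟩ := hcsurj (Multiplicative.ofAdd k)
        refine ⟨t⁻¹ * (p : A), ?_⟩
        have hmem : t⁻¹ * (p : A) ∉ P := hNP t⁻¹ (p : A) htinvP p.2
        rw [f_apply, if_neg hmem]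
        apply congrArg
        rw [show t * (t⁻¹ * (p : A)) = (p : A) from by group, e_spec _ p.2]
        have h5 : (⟨(p : A), p.2⟩ : ↥P) = p := rfl
        rw [h5, hp]
        rfl
    · -- finite kernel
      have hsub : (f.ker : Set A) ⊆ Subtype.val '' (c.ker : Set ↥P) := by
        intro a hmem
        have h1 : f a = 1 := hmem
        rw [f_apply, DihedralGroup.one_def] at h1
        by_cases ha : a ∈ P
        · rw [if_pos ha] at h1
          refine ⟨⟨a, ha⟩, ?_, rfl⟩
          show c ⟨a, ha⟩ = 1
          have h2 : e a = 0 := by injection h1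
          rw [e_spec a ha] at h2
          have h3 := congrArg Multiplicative.ofAdd h2
          simpa using h3
        · rw [if_neg ha] at h1
          exact absurd h1 (by intro h; cases h)
      exact Set.Finite.subset (hcker.image _) hsub
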